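/- Fix y, m ∈ ℝ and α₀, β₀ > 0. Consider the functional Φ(q) = ∫_{(0,∞)} [ (1/2)·log(2π) − (1/2)·log λ + λ·(y − m)²/2 ] dq(λ) + KL(q ‖ Gamma(α₀, β₀)) over probability measures q on (0,∞) with q ≪ Gamma(α₀, β₀), finite KL(q‖Gamma(α₀,β₀)), and λ-integrand q-integrable (the integrand is the negative log-density −log N(y | m, λ^{-1}) of a Gaussian with mean m and precision λ evaluated at y). Then Φ is uniquely minimized at q* = Gamma( α₀ + 1/2 , β₀ + (y − m)²/2 ). -/

import Mathlib

open MeasureTheory ProbabilityTheory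
open scoped ENNReal NNReal

/- Kullback–Leibler divergence `KL(q‖p)`, valued in `[0,∞]`:
`∫ log (dq/dp) dq` if `q ≪ p` and the log-density is `q`-integrable, and `+∞` otherwise. -/
open Classical in
noncomputable def klDiv {Ω : Type*} [MeasurableSpace Ω] (q p : Measure Ω) : ℝ≥0∞ :=
  if q ≪ p ∧ Integrable (llr q p) q then ENNReal.ofReal (∫ x, llr q p x ∂q) else ⊤

/- The negative Gaussian log-density `−log N(y | m, λ⁻¹)` as a function of the precision `λ`. -/
noncomputable def negLogGauss (y m lam : ℝ) : ℝ :=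
  (1 / 2) * Real.log (2 * Real.pi) - (1 / 2) * Real.log lam + lam * (y - m) ^ 2 / 2

/- The functional `Φ(q) = ∫ (−log N(y|m,λ⁻¹)) dq(λ) + KL(q ‖ Gamma(α₀, β₀))`. -/
noncomputable def noiseObjective (y m α₀ β₀ : ℝ) (q : Measure ℝ) : ℝ :=
  (∫ l, negLogGauss y m l ∂q) + (klDiv q (gammaMeasure α₀ β₀)).toReal

section Helpers

open Real Set

lemma gibbs_aux {α : Type*} [MeasurableSpace α] {q μ : Measure α}
    [IsProbabilityMeasure q] [IsProbabilityMeasure μ]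
    (h : q ≪ μ) (hi : Integrable (llr q μ) q) :
    0 ≤ ∫ x, llr q μ x ∂q ∧ ((∫ x, llr q μ x ∂q) = 0 → q = μ) := by
  set r : α → ℝ := fun x => (q.rnDeriv μ x).toReal with hr_def
  have hmeas_r : Measurable r := (Measure.measurable_rnDeriv q μ).ennreal_toReal
  have hlt : ∀ᵐ x ∂q, q.rnDeriv μ x < ∞ := (Measure.rnDeriv_lt_top q μ).filter_mono h.ae_le
  have hpos : ∀ᵐ x ∂q, 0 < r x := by
    filter_upwards [Measure.rnDeriv_pos h, hlt] with x h1 h2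
    exact ENNReal.toReal_pos h1.ne' h2.ne
  -- lintegral of the inverse is ≤ 1
  have hlint : ∫⁻ x, ENNReal.ofReal (r x)⁻¹ ∂q ≤ 1 := by
    have hq : q = μ.withDensity (q.rnDeriv μ) := (Measure.withDensity_rnDeriv_eq q μ h).symm
    calc ∫⁻ x, ENNReal.ofReal (r x)⁻¹ ∂q
        = ∫⁻ x, (q.rnDeriv μ x) * ENNReal.ofReal (r x)⁻¹ ∂μ := by
          conv_lhs => rw [hq]
          rw [lintegral_withDensity_eq_lintegral_mul _ (Measure.measurable_rnDeriv q μ)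
            (g := fun x => ENNReal.ofReal (r x)⁻¹) (hmeas_r.inv.ennreal_ofReal)]
          rfl
      _ ≤ ∫⁻ _, 1 ∂μ := by
          refine lintegral_mono fun x => ?_
          rcases eq_or_ne (q.rnDeriv μ x) ∞ with htop | htop
          · simp [hr_def, htop]
          rcases eq_or_ne (q.rnDeriv μ x) 0 with h0 | h0
          · simp [hr_def, h0]
          · have hrx : 0 < r x := ENNReal.toReal_pos h0 htop
            rw [hr_def]
            simp only
            rw [ENNReal.ofReal_inv_of_pos hrx, ENNReal.ofReal_toReal htop,
              ENNReal.mul_inv_cancel h0 htop]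
      _ = 1 := by simp
  have hinv_int : Integrable (fun x => (r x)⁻¹) q := by
    refine ⟨hmeas_r.inv.aestronglyMeasurable, ?_⟩
    rw [hasFiniteIntegral_iff_norm]
    calc ∫⁻ x, ENNReal.ofReal ‖(r x)⁻¹‖ ∂q = ∫⁻ x, ENNReal.ofReal (r x)⁻¹ ∂q := by
          refine lintegral_congr fun x => ?_
          rw [Real.norm_of_nonneg (by positivity)]
      _ ≤ 1 := hlint
      _ < ∞ := by simp
  have hinv_le : ∫ x, (r x)⁻¹ ∂q ≤ 1 := by
    rw [integral_eq_lintegral_of_nonneg_ae (f := fun x => (r x)⁻¹) (Filter.Eventually.of_forall fun x => by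
        show (0:ℝ) ≤ (r x)⁻¹; exact inv_nonneg.mpr ENNReal.toReal_nonneg)
      hmeas_r.inv.aestronglyMeasurable]
    calc (∫⁻ x, ENNReal.ofReal (r x)⁻¹ ∂q).toReal ≤ (1 : ℝ≥0∞).toReal :=
          ENNReal.toReal_mono ENNReal.one_ne_top hlint
      _ = 1 := by simp
  set u : α → ℝ := fun x => llr q μ x - (1 - (r x)⁻¹) with hu_def
  have hu0 : 0 ≤ᵐ[q] u := by
    filter_upwards [hpos] with x hx
    have h1 := Real.log_le_sub_one_of_pos (inv_pos.mpr hx)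
    rw [Real.log_inv] at h1
    simp only [hu_def, llr, Pi.zero_apply]
    rw [hr_def] at h1 ⊢
    simp only at h1 ⊢
    linarith [h1]
  have hu_int : Integrable u q := hi.sub ((integrable_const 1).sub hinv_int)
  have h2int : Integrable (fun x => 1 - (r x)⁻¹) q := (integrable_const 1).sub hinv_int
  have h_int_u : ∫ x, u x ∂q = ∫ x, llr q μ x ∂q - (1 - ∫ x, (r x)⁻¹ ∂q) := by
    rw [show ∫ x, u x ∂q = ∫ x, llr q μ x - (1 - (r x)⁻¹) ∂q from rfl,
      integral_sub hi h2int, integral_sub (integrable_const 1) hinv_int]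
    simp
  have hu_nonneg : 0 ≤ ∫ x, u x ∂q := integral_nonneg_of_ae hu0
  constructor
  · linarith
  · intro hz
    have h0' : ∫ x, u x ∂q ≤ 0 := by rw [h_int_u, hz]; linarith
    have hint_inv_eq : ∫ x, u x ∂q = 0 := le_antisymm h0' hu_nonneg
    have hu_zero : u =ᵐ[q] 0 := (integral_eq_zero_iff_of_nonneg_ae hu0 hu_int).mp hint_inv_eq
    have hr1 : ∀ᵐ x ∂q, q.rnDeriv μ x = 1 := by
      filter_upwards [hu_zero, hpos, hlt] with x hx hxp hxt
      simp only [hu_def, Pi.zero_apply, llr] at hx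
      have hrx1 : r x = 1 := by
        by_contra hne
        have h1 : Real.log ((r x)⁻¹) < (r x)⁻¹ - 1 :=
          Real.log_lt_sub_one_of_pos (inv_pos.mpr hxp) (by simp [inv_eq_one, hne])
        rw [Real.log_inv] at h1
        rw [hr_def] at hx
        simp only at hx h1
        linarith
      rw [hr_def] at hrx1
      simp only at hrx1
      exact (ENNReal.toReal_eq_one_iff _).mp hrx1
    -- upgrade to μ-a.e.
    set S : Set α := {x | q.rnDeriv μ x ≠ 1} with hS_def
    have hS_meas : MeasurableSet S :=
      (Measure.measurable_rnDeriv q μ (measurableSet_singleton 1)).compl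
    have hqS : q S = 0 := hr1
    have hres : ∫⁻ x in S, q.rnDeriv μ x ∂μ = 0 := by
      rw [Measure.setLIntegral_rnDeriv h]
      exact hqS
    have huniv : (1 : ℝ≥0∞) = μ Sᶜ := by
      have h1 : q Set.univ = ∫⁻ x, q.rnDeriv μ x ∂μ := (Measure.lintegral_rnDeriv h).symm
      rw [measure_univ] at h1
      rw [h1, ← lintegral_add_compl _ hS_meas, hres, zero_add]
      calc ∫⁻ x in Sᶜ, q.rnDeriv μ x ∂μ = ∫⁻ _ in Sᶜ, 1 ∂μ := by
            refine setLIntegral_congr_fun hS_meas.compl ?_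
            intro x hx
            simpa [hS_def] using hx
        _ = μ Sᶜ := by simp
    have hμS : μ S = 0 := by
      have := measure_add_measure_compl (μ := μ) hS_meas
      rw [measure_univ, ← huniv] at this
      -- μ S + 1 = 1
      have h2 : μ S + 1 = 0 + 1 := by rw [this, zero_add]
      exact (ENNReal.add_left_inj ENNReal.one_ne_top).mp h2
    have hd1 : q.rnDeriv μ =ᵐ[μ] 1 := hμS
    calc q = μ.withDensity (q.rnDeriv μ) := (Measure.withDensity_rnDeriv_eq q μ h).symm
      _ = μ.withDensity 1 := withDensity_congr_ae hd1
      _ = μ := withDensity_one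

lemma integrableOn_rpow_mul_exp_neg {s b : ℝ} (hs : -1 < s) (hb : 0 < b) :
    IntegrableOn (fun x : ℝ => x ^ s * Real.exp (-(b * x))) (Ioi 0) := by
  have h := integrableOn_rpow_mul_exp_neg_mul_rpow hs zero_lt_one hb
  refine h.congr_fun (fun x hx => ?_) measurableSet_Ioi
  simp only [Real.rpow_one, neg_mul]

lemma abs_log_le {x ε : ℝ} (hx : 0 < x) (hε : 0 < ε) :
    |Real.log x| ≤ (x ^ ε + x ^ (-ε)) / ε := by
  have h1 : Real.log (x ^ ε) ≤ x ^ ε - 1 := Real.log_le_sub_one_of_pos (rpow_pos_of_pos hx ε)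
  have h2 : Real.log (x ^ (-ε)) ≤ x ^ (-ε) - 1 :=
    Real.log_le_sub_one_of_pos (rpow_pos_of_pos hx (-ε))
  rw [Real.log_rpow hx] at h1 h2
  have hp1 : (0:ℝ) < x ^ ε := rpow_pos_of_pos hx ε
  have hp2 : (0:ℝ) < x ^ (-ε) := rpow_pos_of_pos hx (-ε)
  rw [abs_le]
  constructor
  · rw [neg_le, le_div_iff₀ hε]
    nlinarith
  · rw [le_div_iff₀ hε]
    nlinarith

/-- Integrability wrt a gamma measure from integrability of `f · pdf` on `(0,∞)`. -/
lemma integrable_gammaMeasure_of {a r : ℝ} (ha : 0 < a) (hr : 0 < r) {f : ℝ → ℝ}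
    (hf : Measurable f)
    (hbd : IntegrableOn (fun x => f x * (r ^ a / Real.Gamma a * x ^ (a-1) * Real.exp (-(r*x))))
      (Ioi 0)) :
    Integrable f (gammaMeasure a r) := by
  rw [gammaMeasure, show gammaPDF a r = fun x => ENNReal.ofReal (gammaPDFReal a r x) from rfl,
    integrable_withDensity_iff ((measurable_gammaPDFReal a r).ennreal_ofReal)
    (Filter.Eventually.of_forall fun x => ENNReal.ofReal_lt_top)]
  have hmain : Integrable (fun x => f x * gammaPDFReal a r x) (volume : Measure ℝ) := by
    rw [← integrableOn_univ, ← Set.Iic_union_Ioi (a := (0:ℝ))]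
    refine IntegrableOn.union ?_ ?_
    · have h0 : ∀ᵐ (x : ℝ) ∂(volume.restrict (Iic 0)), f x * gammaPDFReal a r x = 0 := by
        filter_upwards [ae_restrict_of_ae
            (show ∀ᵐ (x : ℝ) ∂(volume : Measure ℝ), x ≠ 0 by simp [ae_iff, not_not]),
          ae_restrict_mem measurableSet_Iic] with x hx hx'
        have hlt : x < 0 := lt_of_le_of_ne hx' hx
        rw [gammaPDFReal, if_neg (not_le.mpr hlt), mul_zero]
      refine (integrableOn_zero).congr ?_
      filter_upwards [h0] with x hx
      exact hx.symm
    · refine hbd.congr_fun (fun x hx => ?_) measurableSet_Ioi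
      rw [gammaPDFReal, if_pos (le_of_lt hx)]
  refine hmain.congr (Filter.Eventually.of_forall fun x => ?_)
  simp [ENNReal.toReal_ofReal (gammaPDFReal_nonneg ha hr x)]

lemma integrable_id_gammaMeasure {a r : ℝ} (ha : 0 < a) (hr : 0 < r) :
    Integrable (fun x : ℝ => x) (gammaMeasure a r) := by
  refine integrable_gammaMeasure_of ha hr measurable_id ?_
  have h := (integrableOn_rpow_mul_exp_neg (s := 1 + (a-1)) (by linarith) hr).const_mul
    (r ^ a / Real.Gamma a)
  refine IntegrableOn.congr_fun h (fun x hx => ?_) measurableSet_Ioi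
  have hx0 : (0:ℝ) < x := hx
  rw [Real.rpow_add hx0, Real.rpow_one]
  ring

lemma integrable_log_gammaMeasure {a r : ℝ} (ha : 0 < a) (hr : 0 < r) :
    Integrable Real.log (gammaMeasure a r) := by
  refine integrable_gammaMeasure_of ha hr Real.measurable_log ?_
  set D := r ^ a / Real.Gamma a with hD
  have hD0 : 0 ≤ D := by
    have h1 := Real.Gamma_pos_of_pos ha
    have h2 := Real.rpow_pos_of_pos hr a
    positivity
  have hg : IntegrableOn (fun x : ℝ => (D / (a/2)) *
      (x ^ (a/2 + (a-1)) * Real.exp (-(r*x)) + x ^ (-(a/2) + (a-1)) * Real.exp (-(r*x))))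
      (Ioi 0) :=
    ((integrableOn_rpow_mul_exp_neg (by linarith) hr).add
      (integrableOn_rpow_mul_exp_neg (by linarith) hr)).const_mul _
  refine Integrable.mono' hg ?_ ?_
  · refine ContinuousOn.aestronglyMeasurable (fun x hx => ?_) measurableSet_Ioi
    have hx0 : (0:ℝ) < x := hx
    refine ContinuousAt.continuousWithinAt ?_
    refine (Real.continuousAt_log hx0.ne').mul ?_
    refine ((continuousAt_const.mul (continuousAt_id.rpow_const (Or.inl hx0.ne'))).mul ?_)
    exact (Real.continuous_exp.comp ((continuous_const.mul continuous_id).neg)).continuousAt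
  · rw [ae_restrict_iff' measurableSet_Ioi]
    refine Filter.Eventually.of_forall fun x hx => ?_
    have hx0 : (0:ℝ) < x := hx
    have hfac : (0:ℝ) ≤ D * x ^ (a-1) * Real.exp (-(r*x)) :=
      mul_nonneg (mul_nonneg hD0 (Real.rpow_pos_of_pos hx0 _).le) (Real.exp_pos _).le
    calc ‖Real.log x * (D * x ^ (a-1) * Real.exp (-(r*x)))‖
        = |Real.log x| * (D * x ^ (a-1) * Real.exp (-(r*x))) := by
          rw [Real.norm_eq_abs, abs_mul, abs_of_nonneg hfac]
      _ ≤ ((x ^ (a/2) + x ^ (-(a/2))) / (a/2)) * (D * x ^ (a-1) * Real.exp (-(r*x))) :=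
          mul_le_mul_of_nonneg_right (abs_log_le hx0 (by linarith)) hfac
      _ = (D / (a/2)) *
          (x ^ (a/2 + (a-1)) * Real.exp (-(r*x)) + x ^ (-(a/2) + (a-1)) * Real.exp (-(r*x))) := by
          rw [Real.rpow_add hx0, Real.rpow_add hx0]
          ring

lemma gamma_pdf_key {α₀ β₀ c : ℝ} (hα : 0 < α₀) (hβ : 0 < β₀) (hc : 0 ≤ c) {x : ℝ} (hx : 0 < x) :
    Real.exp (1/2 * Real.log x - c * x) * gammaPDFReal α₀ β₀ x
      = (β₀ ^ α₀ * Real.Gamma (α₀ + 1/2) / (Real.Gamma α₀ * (β₀ + c) ^ (α₀ + 1/2)))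
        * gammaPDFReal (α₀ + 1/2) (β₀ + c) x := by
  have hβc : (0:ℝ) < β₀ + c := by linarith
  rw [gammaPDFReal, if_pos hx.le, gammaPDFReal, if_pos hx.le]
  have hlog : Real.exp (1/2 * Real.log x - c * x)
      = x ^ (1/2 : ℝ) * Real.exp (-(c*x)) := by
    rw [Real.exp_sub, Real.exp_neg, div_eq_mul_inv, Real.rpow_def_of_pos hx,
      mul_comm (Real.log x)]
  have hx1 : x ^ (α₀ + 1/2 - 1) = x ^ (α₀ - 1) * x ^ (1/2 : ℝ) := by
    rw [← Real.rpow_add hx]; ring_nf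
  have hexp : Real.exp (-((β₀ + c) * x)) = Real.exp (-(β₀*x)) * Real.exp (-(c*x)) := by
    rw [← Real.exp_add]; ring_nf
  have h1 : Real.Gamma α₀ ≠ 0 := (Real.Gamma_pos_of_pos hα).ne'
  have h2 : Real.Gamma (α₀ + 1/2) ≠ 0 := (Real.Gamma_pos_of_pos (by linarith)).ne'
  have h3 : (β₀ + c) ^ (α₀ + 1/2) ≠ 0 := (Real.rpow_pos_of_pos hβc _).ne'
  rw [hlog, hx1, hexp]
  field_simp

lemma measurable_gfun (c : ℝ) : Measurable (fun x : ℝ => 1/2 * Real.log x - c * x) :=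
  (measurable_const.mul Real.measurable_log).sub (measurable_const.mul measurable_id)

lemma ae_ne_zero : ∀ᵐ (x : ℝ) ∂(volume : Measure ℝ), x ≠ 0 := by
  simp [ae_iff, not_not]

lemma gamma_lintegral_exp_g {α₀ β₀ c : ℝ} (hα : 0 < α₀) (hβ : 0 < β₀) (hc : 0 ≤ c) :
    ∫⁻ x, ENNReal.ofReal (Real.exp (1/2 * Real.log x - c * x)) ∂(gammaMeasure α₀ β₀)
      = ENNReal.ofReal (β₀ ^ α₀ * Real.Gamma (α₀ + 1/2) / (Real.Gamma α₀ * (β₀ + c) ^ (α₀ + 1/2))) := by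
  have hβc : (0:ℝ) < β₀ + c := by linarith
  set K := β₀ ^ α₀ * Real.Gamma (α₀ + 1/2) / (Real.Gamma α₀ * (β₀ + c) ^ (α₀ + 1/2)) with hK_def
  have hK : 0 < K := by
    have h1 := Real.Gamma_pos_of_pos hα
    have h2 := Real.Gamma_pos_of_pos (show (0:ℝ) < α₀ + 1/2 by linarith)
    have h3 := Real.rpow_pos_of_pos hβc (α₀ + 1/2)
    have h4 := Real.rpow_pos_of_pos hβ α₀
    positivity
  rw [gammaMeasure, show gammaPDF α₀ β₀ = fun x => ENNReal.ofReal (gammaPDFReal α₀ β₀ x) from rfl,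
    lintegral_withDensity_eq_lintegral_mul _
    ((measurable_gammaPDFReal α₀ β₀).ennreal_ofReal) ((measurable_gfun c).exp.ennreal_ofReal)]
  have hae : (fun x => ENNReal.ofReal (gammaPDFReal α₀ β₀ x)
        * ENNReal.ofReal (Real.exp (1/2 * Real.log x - c * x)))
      =ᵐ[volume] fun x => ENNReal.ofReal K * gammaPDF (α₀ + 1/2) (β₀ + c) x := by
    filter_upwards [ae_ne_zero] with x hx
    rcases lt_or_gt_of_ne hx with hneg | hpos
    · rw [gammaPDF_of_neg hneg, gammaPDFReal, if_neg hneg.not_ge]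
      simp
    · rw [gammaPDF_of_nonneg hpos.le,
        ← ENNReal.ofReal_mul (gammaPDFReal_nonneg hα hβ x), ← ENNReal.ofReal_mul hK.le]
      rw [show gammaPDFReal α₀ β₀ x * Real.exp (1/2 * Real.log x - c * x)
          = Real.exp (1/2 * Real.log x - c * x) * gammaPDFReal α₀ β₀ x from mul_comm _ _,
        gamma_pdf_key hα hβ hc hpos]
      congr 1
      rw [gammaPDFReal, if_pos hpos.le]
  calc ∫⁻ x, (fun x => ENNReal.ofReal (gammaPDFReal α₀ β₀ x)
          * ENNReal.ofReal (Real.exp (1/2 * Real.log x - c * x))) x ∂volume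
      = ∫⁻ x, ENNReal.ofReal K * gammaPDF (α₀ + 1/2) (β₀ + c) x ∂volume :=
        lintegral_congr_ae hae
    _ = ENNReal.ofReal K := by
        rw [show gammaPDF (α₀ + 1/2) (β₀ + c)
            = fun x => ENNReal.ofReal (gammaPDFReal (α₀ + 1/2) (β₀ + c) x) from rfl,
          lintegral_const_mul _ ((measurable_gammaPDFReal _ _).ennreal_ofReal)]
        have h1 : ∫⁻ x, ENNReal.ofReal (gammaPDFReal (α₀ + 1/2) (β₀ + c) x) ∂volume = 1 :=
          lintegral_gammaPDF_eq_one (by linarith) hβc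
        rw [h1, mul_one]

lemma gammaK_pos {α₀ β₀ c : ℝ} (hα : 0 < α₀) (hβ : 0 < β₀) (hc : 0 ≤ c) :
    0 < β₀ ^ α₀ * Real.Gamma (α₀ + 1/2) / (Real.Gamma α₀ * (β₀ + c) ^ (α₀ + 1/2)) := by
  have hβc : (0:ℝ) < β₀ + c := by linarith
  have h1 := Real.Gamma_pos_of_pos hα
  have h2 := Real.Gamma_pos_of_pos (show (0:ℝ) < α₀ + 1/2 by linarith)
  have h3 := Real.rpow_pos_of_pos hβc (α₀ + 1/2)
  have h4 := Real.rpow_pos_of_pos hβ α₀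
  positivity

lemma gamma_integrable_exp_g {α₀ β₀ c : ℝ} (hα : 0 < α₀) (hβ : 0 < β₀) (hc : 0 ≤ c) :
    Integrable (fun x => Real.exp (1/2 * Real.log x - c * x)) (gammaMeasure α₀ β₀) := by
  have hβc : (0:ℝ) < β₀ + c := by linarith
  refine integrable_gammaMeasure_of hα hβ (measurable_gfun c).exp ?_
  have h := (integrableOn_rpow_mul_exp_neg (s := α₀ + 1/2 - 1) (by linarith) hβc).const_mul
    ((β₀ ^ α₀ * Real.Gamma (α₀ + 1/2) / (Real.Gamma α₀ * (β₀ + c) ^ (α₀ + 1/2)))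
      * ((β₀ + c) ^ (α₀ + 1/2) / Real.Gamma (α₀ + 1/2)))
  refine IntegrableOn.congr_fun h (fun x hx => ?_) measurableSet_Ioi
  have hx0 : (0:ℝ) < x := hx
  have hk := gamma_pdf_key (c := c) hα hβ hc hx0
  rw [gammaPDFReal, if_pos hx0.le, gammaPDFReal, if_pos hx0.le] at hk
  rw [show Real.exp (1/2 * Real.log x - c * x) * (β₀ ^ α₀ / Real.Gamma α₀ * x ^ (α₀ - 1)
      * Real.exp (-(β₀ * x)))
    = Real.exp (1/2 * Real.log x - c * x)
      * (β₀ ^ α₀ / Real.Gamma α₀ * x ^ (α₀-1) * Real.exp (-(β₀*x))) from rfl, hk]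
  ring

lemma gamma_integral_exp_g {α₀ β₀ c : ℝ} (hα : 0 < α₀) (hβ : 0 < β₀) (hc : 0 ≤ c) :
    ∫ x, Real.exp (1/2 * Real.log x - c * x) ∂(gammaMeasure α₀ β₀)
      = β₀ ^ α₀ * Real.Gamma (α₀ + 1/2) / (Real.Gamma α₀ * (β₀ + c) ^ (α₀ + 1/2)) := by
  rw [integral_eq_lintegral_of_nonneg_ae
    (Filter.Eventually.of_forall fun x => (Real.exp_pos _).le)
    (measurable_gfun c).exp.aestronglyMeasurable, gamma_lintegral_exp_g hα hβ hc,
    ENNReal.toReal_ofReal (gammaK_pos hα hβ hc).le]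

lemma gamma_tilted {α₀ β₀ c : ℝ} (hα : 0 < α₀) (hβ : 0 < β₀) (hc : 0 ≤ c) :
    (gammaMeasure α₀ β₀).tilted (fun x => 1/2 * Real.log x - c * x)
      = gammaMeasure (α₀ + 1/2) (β₀ + c) := by
  have hβc : (0:ℝ) < β₀ + c := by linarith
  have hK := gammaK_pos hα hβ hc
  set K := β₀ ^ α₀ * Real.Gamma (α₀ + 1/2) / (Real.Gamma α₀ * (β₀ + c) ^ (α₀ + 1/2)) with hK_def
  unfold Measure.tilted
  rw [gamma_integral_exp_g hα hβ hc, ← hK_def]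
  rw [show gammaMeasure α₀ β₀ = volume.withDensity
      (fun x => ENNReal.ofReal (gammaPDFReal α₀ β₀ x)) from rfl,
    ← withDensity_mul _ ((measurable_gammaPDFReal α₀ β₀).ennreal_ofReal)
      (((measurable_gfun c).exp.div_const K).ennreal_ofReal)]
  rw [show gammaMeasure (α₀ + 1/2) (β₀ + c) = volume.withDensity (gammaPDF (α₀ + 1/2) (β₀ + c))
    from rfl]
  refine withDensity_congr_ae ?_
  filter_upwards [ae_ne_zero] with x hx
  rcases lt_or_gt_of_ne hx with hneg | hpos
  · simp only [Pi.mul_apply]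
    rw [gammaPDF_of_neg hneg, gammaPDFReal, if_neg hneg.not_ge]
    simp
  · simp only [Pi.mul_apply]
    rw [gammaPDF_of_nonneg hpos.le,
      ← ENNReal.ofReal_mul (gammaPDFReal_nonneg hα hβ x)]
    congr 1
    have hk := gamma_pdf_key (c := c) hα hβ hc hpos
    rw [← hK_def] at hk
    simp only [gammaPDFReal, if_pos hpos.le] at hk ⊢
    field_simp at hk ⊢
    linarith [hk]

end Helpers

/-- Closed-form variational update for the pixelwise noise precision `λ` (Eq. 26 of the paper,
shape–rate parameterization): the functional
`Φ(q) = ∫ [½ log(2π) − ½ log λ + λ(y−m)²/2] dq(λ) + KL(q‖Gamma(α₀,β₀))`, over probability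
measures `q ≪ Gamma(α₀,β₀)` with finite KL and integrable integrand, is uniquely minimized at
`q* = Gamma(α₀ + 1/2, β₀ + (y − m)²/2)`. -/
theorem gamma_update_noise (y m : ℝ) (α₀ β₀ : ℝ) (hα : 0 < α₀) (hβ : 0 < β₀)
    (q : Measure ℝ) [IsProbabilityMeasure q] (hac : q ≪ gammaMeasure α₀ β₀)
    (hkl : klDiv q (gammaMeasure α₀ β₀) ≠ ⊤)
    (hint : Integrable (negLogGauss y m) q) :
    noiseObjective y m α₀ β₀ (gammaMeasure (α₀ + 1 / 2) (β₀ + (y - m) ^ 2 / 2)) ≤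
      noiseObjective y m α₀ β₀ q ∧
    (noiseObjective y m α₀ β₀ q =
        noiseObjective y m α₀ β₀ (gammaMeasure (α₀ + 1 / 2) (β₀ + (y - m) ^ 2 / 2)) ↔
      q = gammaMeasure (α₀ + 1 / 2) (β₀ + (y - m) ^ 2 / 2)) := by
  set c : ℝ := (y - m) ^ 2 / 2 with hc_def
  have hc : 0 ≤ c := by positivity
  have hβc : (0:ℝ) < β₀ + c := by linarith
  have hα₁ : (0:ℝ) < α₀ + 1/2 := by linarith
  haveI hpP : IsProbabilityMeasure (gammaMeasure α₀ β₀) := isProbabilityMeasure_gammaMeasure hα hβ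
  haveI hQP : IsProbabilityMeasure (gammaMeasure (α₀ + 1/2) (β₀ + c)) :=
    isProbabilityMeasure_gammaMeasure hα₁ hβc
  set g : ℝ → ℝ := fun x => 1/2 * Real.log x - c * x with hg_def
  set A : ℝ := 1/2 * Real.log (2 * Real.pi) with hA_def
  set K : ℝ := β₀ ^ α₀ * Real.Gamma (α₀ + 1/2) / (Real.Gamma α₀ * (β₀ + c) ^ (α₀ + 1/2))
    with hK_def
  have hneg_eq : ∀ x, negLogGauss y m x = A - g x := by
    intro x
    rw [negLogGauss, hg_def, hA_def, hc_def]
    ring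
  have hexp_int : Integrable (fun x => Real.exp (g x)) (gammaMeasure α₀ β₀) :=
    gamma_integrable_exp_g hα hβ hc
  have hZ : ∫ x, Real.exp (g x) ∂(gammaMeasure α₀ β₀) = K := gamma_integral_exp_g hα hβ hc
  have htilted : (gammaMeasure α₀ β₀).tilted g = gammaMeasure (α₀ + 1/2) (β₀ + c) :=
    gamma_tilted hα hβ hc
  have hQp : gammaMeasure (α₀ + 1/2) (β₀ + c) ≪ gammaMeasure α₀ β₀ :=
    htilted ▸ (tilted_absolutelyContinuous (gammaMeasure α₀ β₀) g)
  have hpQ : gammaMeasure α₀ β₀ ≪ gammaMeasure (α₀ + 1/2) (β₀ + c) :=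
    htilted ▸ absolutelyContinuous_tilted hexp_int
  have hqQ : q ≪ gammaMeasure (α₀ + 1/2) (β₀ + c) := hac.trans hpQ
  have hgQ_int : Integrable g (gammaMeasure (α₀ + 1/2) (β₀ + c)) :=
    ((integrable_log_gammaMeasure hα₁ hβc).const_mul (1/2)).sub
      ((integrable_id_gammaMeasure hα₁ hβc).const_mul c)
  have hnegQ_int : Integrable (negLogGauss y m) (gammaMeasure (α₀ + 1/2) (β₀ + c)) := by
    refine ((integrable_const A).sub hgQ_int).congr (Filter.Eventually.of_forall fun x => ?_)
    exact (hneg_eq x).symm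
  -- llr of Q wrt p
  have hllr_Qp_ae : llr (gammaMeasure (α₀ + 1/2) (β₀ + c)) (gammaMeasure α₀ β₀)
      =ᵐ[gammaMeasure (α₀ + 1/2) (β₀ + c)] fun x => g x - Real.log K := by
    have h1 := llr_tilted_left (Measure.AbsolutelyContinuous.rfl (μ := gammaMeasure α₀ β₀))
      hexp_int (measurable_gfun c).aemeasurable
    have h2 : llr (gammaMeasure α₀ β₀) (gammaMeasure α₀ β₀) =ᵐ[gammaMeasure α₀ β₀] 0 := by
      filter_upwards [Measure.rnDeriv_self (gammaMeasure α₀ β₀)] with x hx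
      rw [llr, hx]
      simp
    rw [hZ] at h1
    have h3 : llr ((gammaMeasure α₀ β₀).tilted g) (gammaMeasure α₀ β₀)
        =ᵐ[gammaMeasure α₀ β₀] fun x => g x - Real.log K := by
      filter_upwards [h1, h2] with x hx1 hx2
      rw [hx1, hx2]
      simp
    rw [htilted] at h3
    exact h3.filter_mono hQp.ae_le
  have hllr_Qp_int : Integrable (llr (gammaMeasure (α₀ + 1/2) (β₀ + c)) (gammaMeasure α₀ β₀))
      (gammaMeasure (α₀ + 1/2) (β₀ + c)) :=
    (hgQ_int.sub (integrable_const (Real.log K))).congr hllr_Qp_ae.symm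
  -- the master formula
  have formula : ∀ (q' : Measure ℝ), IsProbabilityMeasure q' → q' ≪ gammaMeasure α₀ β₀ →
      Integrable (llr q' (gammaMeasure α₀ β₀)) q' → Integrable (negLogGauss y m) q' →
      Integrable (llr q' (gammaMeasure (α₀ + 1/2) (β₀ + c))) q' ∧
        noiseObjective y m α₀ β₀ q'
          = A - Real.log K + ∫ x, llr q' (gammaMeasure (α₀ + 1/2) (β₀ + c)) x ∂q' := by
    intro q' hq'P hq'p hllr hnegint
    haveI := hq'P
    have hgq' : Integrable g q' := by
      refine ((integrable_const A).sub hnegint).congr (Filter.Eventually.of_forall fun x => ?_)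
      simp only [Pi.sub_apply]
      rw [hneg_eq x]
      ring
    have hint_tilt : Integrable (llr q' ((gammaMeasure α₀ β₀).tilted g)) q' :=
      integrable_llr_tilted_right hq'p hgq' hllr hexp_int
    have heq_tilt : ∫ x, llr q' ((gammaMeasure α₀ β₀).tilted g) x ∂q'
        = ∫ x, llr q' (gammaMeasure α₀ β₀) x ∂q' - ∫ x, g x ∂q' + Real.log K := by
      rw [integral_llr_tilted_right hq'p hgq' hexp_int hllr, hZ]
    rw [htilted] at hint_tilt heq_tilt
    have hkl_eq : (klDiv q' (gammaMeasure α₀ β₀)).toReal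
        = ∫ x, llr q' (gammaMeasure α₀ β₀) x ∂q' := by
      have h0 : 0 ≤ ∫ x, llr q' (gammaMeasure α₀ β₀) x ∂q' := (gibbs_aux hq'p hllr).1
      rw [klDiv, if_pos ⟨hq'p, hllr⟩, ENNReal.toReal_ofReal h0]
    have hneg_int_eq : ∫ x, negLogGauss y m x ∂q' = A - ∫ x, g x ∂q' := by
      calc ∫ x, negLogGauss y m x ∂q' = ∫ x, (A - g x) ∂q' :=
            integral_congr_ae (Filter.Eventually.of_forall hneg_eq)
        _ = A - ∫ x, g x ∂q' := by
            rw [integral_sub (integrable_const A) hgq']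
            simp
    refine ⟨hint_tilt, ?_⟩
    show (∫ l, negLogGauss y m l ∂q') + (klDiv q' (gammaMeasure α₀ β₀)).toReal = _
    rw [hkl_eq, hneg_int_eq]
    linarith [heq_tilt]
  -- extract integrability of llr q p from finiteness of the KL divergence
  have hcond : q ≪ gammaMeasure α₀ β₀ ∧ Integrable (llr q (gammaMeasure α₀ β₀)) q := by
    by_contra hcon
    unfold klDiv at hkl
    rw [if_neg hcon] at hkl
    exact hkl rfl
  obtain ⟨hfq_int, hfq_eq⟩ := formula q inferInstance hac hcond.2 hint
  obtain ⟨hfQ_int, hfQ_eq⟩ := formula (gammaMeasure (α₀ + 1/2) (β₀ + c)) hQP hQp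
    hllr_Qp_int hnegQ_int
  have hQQ : ∫ x, llr (gammaMeasure (α₀ + 1/2) (β₀ + c)) (gammaMeasure (α₀ + 1/2) (β₀ + c)) x
      ∂(gammaMeasure (α₀ + 1/2) (β₀ + c)) = 0 := by
    have h2 : llr (gammaMeasure (α₀ + 1/2) (β₀ + c)) (gammaMeasure (α₀ + 1/2) (β₀ + c))
        =ᵐ[gammaMeasure (α₀ + 1/2) (β₀ + c)] 0 := by
      filter_upwards [Measure.rnDeriv_self (gammaMeasure (α₀ + 1/2) (β₀ + c))] with x hx
      rw [llr, hx]
      simp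
    rw [integral_congr_ae h2]
    simp
  rw [hQQ, add_zero] at hfQ_eq
  have hgibbs := gibbs_aux hqQ hfq_int
  have h2eq : (α₀ + 1 / 2 : ℝ) = α₀ + 1/2 := by norm_num
  constructor
  · rw [hfq_eq, hfQ_eq]
    linarith [hgibbs.1]
  · constructor
    · intro heq
      refine hgibbs.2 ?_
      rw [hfq_eq, hfQ_eq] at heq
      linarith
    · intro heq
      rw [heq]
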